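/- If all components of the multi-index i are even, say i = 2u with u ∈ ℕ₀^d, then ∫_{B(0;r)} x^i dx = g(u) · r^{|i|+d} / (|i|+d), where g(u) = 2·Γ(u_1+1/2)···Γ(u_d+1/2) / Γ(u_1+···+u_d+d/2) and |i| = i_1+···+i_d. -/

import Mathlib

open MeasureTheory

open Set Metric

lemma gauss_moment_1d (k : ℕ) :
    ∫ x : ℝ, x ^ (2 * k) * Real.exp (-x ^ 2) = Real.Gamma ((k : ℝ) + 1 / 2) := by
  calc ∫ x : ℝ, x ^ (2 * k) * Real.exp (-x ^ 2)
      = ∫ x : ℝ, |x| ^ (2 * k) * Real.exp (-|x| ^ 2) := by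
        refine integral_congr_ae (Filter.Eventually.of_forall fun x => ?_)
        simp only [pow_mul, sq_abs]
    _ = 2 * ∫ x in Ioi (0:ℝ), x ^ (2 * k) * Real.exp (-x ^ 2) :=
        integral_comp_abs (f := fun t : ℝ => t ^ (2 * k) * Real.exp (-t ^ 2))
    _ = 2 * ∫ x in Ioi (0:ℝ), x ^ ((2 * k : ℕ) : ℝ) * Real.exp (-x ^ (2:ℝ)) := by
        congr 1
        refine setIntegral_congr_fun measurableSet_Ioi fun x hx => ?_
        rw [Real.rpow_natCast, show (2:ℝ) = ((2:ℕ):ℝ) by norm_num, Real.rpow_natCast]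
    _ = Real.Gamma ((k : ℝ) + 1 / 2) := by
        rw [integral_rpow_mul_exp_neg_rpow (by norm_num)
            (lt_of_lt_of_le neg_one_lt_zero (by positivity)),
          show (((2 * k : ℕ):ℝ) + 1) / 2 = (k:ℝ) + 1/2 by push_cast; ring]
        ring

lemma gauss_prod (d : ℕ) (u : Fin d → ℕ) :
    ∫ x : EuclideanSpace ℝ (Fin d), (∏ j, x j ^ (2 * u j)) * Real.exp (-‖x‖ ^ 2)
      = ∏ j, Real.Gamma ((u j : ℝ) + 1 / 2) := by
  have he := (EuclideanSpace.volume_preserving_symm_measurableEquiv_toLp (Fin d)).symm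
  rw [← he.integral_comp' (fun x : EuclideanSpace ℝ (Fin d) =>
      (∏ j, x j ^ (2 * u j)) * Real.exp (-‖x‖ ^ 2))]
  have key : ∀ y : Fin d → ℝ,
      (∏ j, ((MeasurableEquiv.toLp 2 (Fin d → ℝ)).symm.symm y) j ^ (2 * u j)) *
        Real.exp (-‖(MeasurableEquiv.toLp 2 (Fin d → ℝ)).symm.symm y‖ ^ 2)
      = ∏ j, (y j ^ (2 * u j) * Real.exp (-(y j) ^ 2)) := by
    intro y
    have hy : ∀ j, ((MeasurableEquiv.toLp 2 (Fin d → ℝ)).symm.symm y) j = y j := fun j => rfl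
    have hnorm : ‖(MeasurableEquiv.toLp 2 (Fin d → ℝ)).symm.symm y‖ ^ 2 = ∑ j, (y j) ^ 2 := by
      rw [EuclideanSpace.norm_eq, Real.sq_sqrt (by positivity)]
      simp [hy, sq_abs]
    simp only [hy, hnorm, Finset.prod_mul_distrib, ← Real.exp_sum, Finset.sum_neg_distrib]
  calc ∫ y : Fin d → ℝ, (∏ j, ((MeasurableEquiv.toLp 2 (Fin d → ℝ)).symm.symm y) j ^ (2 * u j)) *
        Real.exp (-‖(MeasurableEquiv.toLp 2 (Fin d → ℝ)).symm.symm y‖ ^ 2)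
      = ∫ y : Fin d → ℝ, ∏ j, (y j ^ (2 * u j) * Real.exp (-(y j) ^ 2)) :=
        integral_congr_ae (Filter.Eventually.of_forall key)
    _ = ∏ j, ∫ t : ℝ, t ^ (2 * u j) * Real.exp (-t ^ 2) :=
        integral_fintype_prod_eq_prod (ι := Fin d) (fun j t => t ^ (2 * u j) * Real.exp (-t ^ 2))
    _ = ∏ j, Real.Gamma ((u j : ℝ) + 1 / 2) :=
        Finset.prod_congr rfl fun j _ => gauss_moment_1d (u j)

lemma polar_integral {d : ℕ} (hd : 0 < d) (g : EuclideanSpace ℝ (Fin d) → ℝ) :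
    ∫ x, g x =
      ∫ p : sphere (0 : EuclideanSpace ℝ (Fin d)) 1 × Set.Ioi (0:ℝ),
        g (p.2.1 • p.1.1) ∂((volume : Measure (EuclideanSpace ℝ (Fin d))).toSphere.prod
          (Measure.volumeIoiPow (d - 1))) := by
  haveI : Nonempty (Fin d) := Fin.pos_iff_nonempty.mp hd
  haveI : Nontrivial (EuclideanSpace ℝ (Fin d)) :=
    inferInstance
  have h1 : ∫ x, g x ∂(volume : Measure (EuclideanSpace ℝ (Fin d)))
      = ∫ x : ({(0 : EuclideanSpace ℝ (Fin d))}ᶜ : Set _), g x ∂(volume.comap Subtype.val) := by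
    rw [integral_subtype_comap (measurableSet_singleton 0).compl,
      MeasureTheory.restrict_compl_singleton]
  have h2 := (volume : Measure (EuclideanSpace ℝ (Fin d))).measurePreserving_homeomorphUnitSphereProd.integral_comp
      (Homeomorph.measurableEmbedding _)
      (fun p : sphere (0 : EuclideanSpace ℝ (Fin d)) 1 × Set.Ioi (0:ℝ) => g (p.2.1 • p.1.1))
  rw [finrank_euclideanSpace_fin] at h2
  rw [h1, ← h2]
  refine integral_congr_ae (Filter.Eventually.of_forall fun x => ?_)
  simp only
  rw [← homeomorphUnitSphereProd_symm_apply_coe, Homeomorph.symm_apply_apply]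

lemma integral_volumeIoiPow (m : ℕ) (G : ℝ → ℝ) :
    ∫ t : Set.Ioi (0:ℝ), G t.1 ∂(Measure.volumeIoiPow m) = ∫ t in Set.Ioi (0:ℝ), t ^ m * G t := by
  simp only [Measure.volumeIoiPow, ENNReal.ofReal]
  rw [integral_withDensity_eq_integral_smul ((measurable_subtype_coe.pow_const _).real_toNNReal),
    integral_subtype_comap measurableSet_Ioi (fun a => (a ^ m).toNNReal • G a)]
  refine setIntegral_congr_fun measurableSet_Ioi fun x hx => ?_
  rw [NNReal.smul_def, Real.coe_toNNReal _ (pow_nonneg hx.out.le _), smul_eq_mul]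

lemma monomial_homog {d : ℕ} (u : Fin d → ℕ) (t : ℝ) (y : EuclideanSpace ℝ (Fin d)) :
    ∏ j, (t • y) j ^ (2 * u j) = t ^ (∑ j, 2 * u j) * ∏ j, y j ^ (2 * u j) := by
  simp only [PiLp.smul_apply, smul_eq_mul, mul_pow, Finset.prod_mul_distrib,
    Finset.prod_pow_eq_pow_sum]


/-- If all components of the multi-index are even, say `i = 2u`, then
`∫_{B(0;r)} x^i dx = g(u) · r^{|i|+d} / (|i|+d)` where
`g(u) = 2 Γ(u₁+1/2)⋯Γ(u_d+1/2) / Γ(u₁+⋯+u_d+d/2)`. -/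
theorem integral_monomial_even
    (d : ℕ) (hd : 0 < d) (r : ℝ) (hr : 0 < r) (u : Fin d → ℕ) :
    ∫ x in Metric.closedBall (0 : EuclideanSpace ℝ (Fin d)) r, ∏ j, x j ^ (2 * u j) =
      (2 * (∏ j, Real.Gamma ((u j : ℝ) + 1 / 2)) /
          Real.Gamma ((∑ j, (u j : ℝ)) + d / 2)) *
        r ^ ((∑ j, 2 * u j) + d) / (((∑ j, 2 * u j) + d : ℕ) : ℝ) := by
  obtain ⟨m, rfl⟩ : ∃ m, d = m + 1 := ⟨d - 1, (Nat.succ_pred_eq_of_pos hd).symm⟩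
  set n := ∑ j, 2 * u j with hn
  set S := ∫ y : sphere (0 : EuclideanSpace ℝ (Fin (m+1))) 1,
      (∏ j, (y : EuclideanSpace ℝ (Fin (m+1))) j ^ (2 * u j)) ∂(volume.toSphere) with hS
  -- Step 1 : ball integral in terms of S
  have step1 : ∫ x in Metric.closedBall (0 : EuclideanSpace ℝ (Fin (m+1))) r,
      ∏ j, x j ^ (2 * u j) = S * (r ^ (n + (m+1)) / (n + (m+1))) := by
    rw [← integral_indicator measurableSet_closedBall, polar_integral hd]
    have key : ∀ p : sphere (0 : EuclideanSpace ℝ (Fin (m+1))) 1 × Set.Ioi (0:ℝ),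
        indicator (Metric.closedBall (0 : EuclideanSpace ℝ (Fin (m+1))) r)
          (fun x => ∏ j, x j ^ (2 * u j)) (p.2.1 • p.1.1)
        = (∏ j, (p.1 : EuclideanSpace ℝ (Fin (m+1))) j ^ (2 * u j)) *
            indicator (Iic r) (fun t => t ^ n) p.2.1 := by
      rintro ⟨y, t⟩
      have hnorm : ‖t.1 • (y : EuclideanSpace ℝ (Fin (m+1)))‖ = t.1 := by
        rw [norm_smul, mem_sphere_zero_iff_norm.mp y.2, mul_one,
          Real.norm_eq_abs, abs_of_pos t.2]
      by_cases h : t.1 ≤ r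
      · rw [indicator_of_mem (by rw [mem_closedBall_zero_iff, hnorm]; exact h),
          indicator_of_mem (mem_Iic.mpr h), monomial_homog]
        ring
      · rw [indicator_of_notMem (by rw [mem_closedBall_zero_iff, hnorm]; exact h),
          indicator_of_notMem (by simpa using h)]
        simp
    rw [integral_congr_ae (Filter.Eventually.of_forall key),
      integral_prod_mul (f := fun y : sphere (0 : EuclideanSpace ℝ (Fin (m+1))) 1 =>
          ∏ j, (y : EuclideanSpace ℝ (Fin (m+1))) j ^ (2 * u j))
        (g := fun t : Set.Ioi (0:ℝ) => indicator (Iic r) (fun s => s ^ n) t.1),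
      integral_volumeIoiPow]
    congr 1
    have h1 : ∀ t ∈ Ioi (0:ℝ), t ^ (m + 1 - 1) * indicator (Iic r) (fun s => s ^ n) t
        = indicator (Iic r) (fun s => s ^ (m + 1 - 1) * s ^ n) t := by
      intro t _
      by_cases h : t ∈ Iic r
      · rw [indicator_of_mem h, indicator_of_mem h]
      · rw [indicator_of_notMem h, indicator_of_notMem h, mul_zero]
    rw [setIntegral_congr_fun measurableSet_Ioi h1,
      setIntegral_indicator measurableSet_Iic, Ioi_inter_Iic,
      ← intervalIntegral.integral_of_le hr.le]
    have hexp : ∀ x : ℝ, x ^ (m + 1 - 1) * x ^ n = x ^ (m + n) := by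
      intro x; rw [Nat.add_sub_cancel, ← pow_add]
    simp_rw [hexp]
    rw [integral_pow]
    have hmn : m + n + 1 = n + (m + 1) := by omega
    rw [hmn, zero_pow (by omega : n + (m+1) ≠ 0)]
    push_cast
    ring
  -- Step 2 : Gaussian integral in terms of S
  have step2 : (∏ j, Real.Gamma ((u j : ℝ) + 1 / 2))
      = S * (1 / 2 * Real.Gamma (((n : ℝ) + (m+1)) / 2)) := by
    rw [← gauss_prod (m+1) u, polar_integral hd
      (fun x : EuclideanSpace ℝ (Fin (m+1)) => (∏ j, x j ^ (2 * u j)) * Real.exp (-‖x‖ ^ 2))]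
    have key : ∀ p : sphere (0 : EuclideanSpace ℝ (Fin (m+1))) 1 × Set.Ioi (0:ℝ),
        (∏ j, (p.2.1 • (p.1 : EuclideanSpace ℝ (Fin (m+1)))) j ^ (2 * u j)) *
          Real.exp (-‖p.2.1 • (p.1 : EuclideanSpace ℝ (Fin (m+1)))‖ ^ 2)
        = (∏ j, (p.1 : EuclideanSpace ℝ (Fin (m+1))) j ^ (2 * u j)) *
            (p.2.1 ^ n * Real.exp (-p.2.1 ^ 2)) := by
      rintro ⟨y, t⟩
      have hnorm : ‖t.1 • (y : EuclideanSpace ℝ (Fin (m+1)))‖ = t.1 := by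
        rw [norm_smul, mem_sphere_zero_iff_norm.mp y.2, mul_one,
          Real.norm_eq_abs, abs_of_pos t.2]
      simp only [monomial_homog, hnorm]
      ring
    rw [integral_congr_ae (Filter.Eventually.of_forall key),
      integral_prod_mul (f := fun y : sphere (0 : EuclideanSpace ℝ (Fin (m+1))) 1 =>
          ∏ j, (y : EuclideanSpace ℝ (Fin (m+1))) j ^ (2 * u j))
        (g := fun t : Set.Ioi (0:ℝ) => t.1 ^ n * Real.exp (-t.1 ^ 2)),
      integral_volumeIoiPow (m + 1 - 1) (fun t => t ^ n * Real.exp (-t ^ 2))]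
    congr 1
    have h1 : ∀ t ∈ Ioi (0:ℝ), t ^ (m + 1 - 1) * (t ^ n * Real.exp (-t ^ 2))
        = t ^ ((m + n : ℕ) : ℝ) * Real.exp (-t ^ (2:ℝ)) := by
      intro t ht
      rw [Real.rpow_natCast, show (2:ℝ) = ((2:ℕ):ℝ) by norm_num, Real.rpow_natCast,
        Nat.add_sub_cancel, ← mul_assoc, ← pow_add]
    rw [setIntegral_congr_fun measurableSet_Ioi h1,
      integral_rpow_mul_exp_neg_rpow (by norm_num)
        (lt_of_lt_of_le neg_one_lt_zero (by positivity))]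
    congr 2
    push_cast
    ring
  -- Combine
  have hGpos : 0 < Real.Gamma (((n : ℝ) + (m+1)) / 2) :=
    Real.Gamma_pos_of_pos (by positivity)
  have hSval : S = 2 * (∏ j, Real.Gamma ((u j : ℝ) + 1 / 2)) /
      Real.Gamma (((n : ℝ) + (m+1)) / 2) := by
    rw [eq_div_iff hGpos.ne', step2]
    ring
  have harg : ((n : ℝ) + (m+1)) / 2 = (∑ j, (u j : ℝ)) + ((m+1) : ℕ) / 2 := by
    rw [hn]
    push_cast
    rw [← Finset.mul_sum]
    ring
  rw [step1, hSval, harg]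
  push_cast
  ring
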